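/- Let A, G be symmetric positive definite n×n matrices with μI ⪯ A ⪯ ωI (0 < μ ≤ ω) and G ⪰ A. Choose the greedy coordinate vector ū = argmax over the standard basis vectors e_1,…,e_n of ⟨Ge, e⟩/⟨Ae, e⟩. Then the BFGS update G⁺ = BFGS(G, A, ū) := G − Gūūᵀ G/⟨Gū, ū⟩ + Aūūᵀ A/⟨Aū, ū⟩ satisfies σ_A(G⁺) ≤ (1 − μ/(nω))·σ_A(G). -/

import Mathlib

open Matrix

section helpers
variable {n : ℕ}

lemma myTrace_mul_vecMulVec (M : Matrix (Fin n) (Fin n) ℝ) (u v : Fin n → ℝ) :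
    (M * vecMulVec u v).trace = v ⬝ᵥ (M *ᵥ u) := by
  simp only [Matrix.trace, Matrix.diag, Matrix.mul_apply, vecMulVec_apply, dotProduct, mulVec,
    Finset.mul_sum]
  exact Finset.sum_congr rfl fun i _ => Finset.sum_congr rfl fun k _ => by ring

lemma myQuad_nonneg {M : Matrix (Fin n) (Fin n) ℝ} (hM : M.PosSemidef) (x : Fin n → ℝ) :
    0 ≤ x ⬝ᵥ M *ᵥ x := by
  simpa using hM.dotProduct_mulVec_nonneg x

lemma myDot_symm {M : Matrix (Fin n) (Fin n) ℝ} (hM : M.IsHermitian) (x y : Fin n → ℝ) :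
    x ⬝ᵥ M *ᵥ y = y ⬝ᵥ M *ᵥ x := by
  have hMs : Mᵀ = M := by
    have := hM.eq
    simpa [Matrix.conjTranspose_eq_transpose_of_trivial] using this
  have key : ∀ i k, M k i = M i k := fun i k => by
    simpa using congrFun (congrFun hMs i) k
  simp only [dotProduct, mulVec, Finset.mul_sum]
  rw [Finset.sum_comm]
  exact Finset.sum_congr rfl fun i _ => Finset.sum_congr rfl fun k _ => by rw [key i k]; ring

lemma myCS {M : Matrix (Fin n) (Fin n) ℝ} (hM : M.PosSemidef) (x y : Fin n → ℝ) :
    (x ⬝ᵥ M *ᵥ y)^2 ≤ (x ⬝ᵥ M *ᵥ x) * (y ⬝ᵥ M *ᵥ y) := by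
  have h : ∀ t : ℝ, 0 ≤ (y ⬝ᵥ M *ᵥ y) * (t*t) + (2 * (x ⬝ᵥ M *ᵥ y)) * t + (x ⬝ᵥ M *ᵥ x) := by
    intro t
    have := myQuad_nonneg hM (x + t • y)
    have hsym := myDot_symm hM.isHermitian x y
    simp only [dotProduct_add, add_dotProduct, Matrix.mulVec_add, Matrix.mulVec_smul,
      dotProduct_smul, smul_dotProduct, smul_eq_mul] at this
    rw [← hsym] at this
    nlinarith [this]
  have := discrim_le_zero h
  rw [discrim] at this
  nlinarith

lemma myTrace_psd_nonneg {M : Matrix (Fin n) (Fin n) ℝ} (hM : M.PosSemidef) :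
    0 ≤ M.trace := by
  rw [Matrix.trace]
  apply Finset.sum_nonneg
  intro i _
  have := myQuad_nonneg hM (Pi.single i 1)
  simpa [Matrix.diag, Matrix.mulVec_single] using this

open scoped MatrixOrder in
lemma myTrace_mul_psd_nonneg {P Q : Matrix (Fin n) (Fin n) ℝ}
    (hP : P.PosSemidef) (hQ : Q.PosSemidef) : 0 ≤ (P * Q).trace := by
  have h1 : P * Q = P * (CFC.sqrt Q * CFC.sqrt Q) := by rw [CFC.sqrt_mul_sqrt_self Q hQ.nonneg]
  rw [h1, ← Matrix.mul_assoc, Matrix.trace_mul_cycle]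
  have h2 : (CFC.sqrt Q * P * CFC.sqrt Q).PosSemidef := by
    have := hP.mul_mul_conjTranspose_same (CFC.sqrt Q)
    rwa [(CFC.sqrt_nonneg Q).posSemidef.isHermitian.eq] at this
  exact myTrace_psd_nonneg h2

end helpers


set_option maxHeartbeats 1000000 in
/-- Greedy BFGS update: with `μI ⪯ A ⪯ ωI`, `G ⪰ A`, and `i₀` the greedy
coordinate maximizing `⟨G eᵢ, eᵢ⟩/⟨A eᵢ, eᵢ⟩ = G i i / A i i`, the BFGS update
`G⁺ = G - GūūᵀG/⟨Gū,ū⟩ + AūūᵀA/⟨Aū,ū⟩` (with `ū = e_{i₀}`) satisfies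
`σ_A(G⁺) ≤ (1 - μ/(nω)) σ_A(G)`. -/
theorem stmt_14 {n : ℕ} (hn : 0 < n) (A G : Matrix (Fin n) (Fin n) ℝ)
    (μ ω : ℝ) (hμ : 0 < μ) (hμω : μ ≤ ω)
    (hA : A.PosDef) (hG : G.PosDef)
    (hAμ : (A - μ • (1 : Matrix (Fin n) (Fin n) ℝ)).PosSemidef)
    (hAω : ((ω • (1 : Matrix (Fin n) (Fin n) ℝ)) - A).PosSemidef)
    (hGA : (G - A).PosSemidef)
    (i₀ : Fin n) (hgreedy : ∀ j, G j j / A j j ≤ G i₀ i₀ / A i₀ i₀) :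
    (A⁻¹ * (G - (G i₀ i₀)⁻¹ • vecMulVec (G *ᵥ Pi.single i₀ 1) (G *ᵥ Pi.single i₀ 1)
        + (A i₀ i₀)⁻¹ • vecMulVec (A *ᵥ Pi.single i₀ 1) (A *ᵥ Pi.single i₀ 1))).trace - n ≤
      (1 - μ / (n * ω)) * ((A⁻¹ * G).trace - n) := by
  classical
  have hω : (0:ℝ) < ω := lt_of_lt_of_le hμ hμω
  have hnR : (0:ℝ) < n := by exact_mod_cast hn
  have hdet : IsUnit A.det := hA.det_pos.ne'.isUnit
  have hInv : A⁻¹ * A = 1 := Matrix.nonsing_inv_mul A hdet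
  have hInv2 : A * A⁻¹ = 1 := Matrix.mul_nonsing_inv A hdet
  have hAinvPD : A⁻¹.PosDef := hA.inv
  -- diagonal facts
  have hdiag : ∀ (M : Matrix (Fin n) (Fin n) ℝ) (j : Fin n),
      (Pi.single j 1 : Fin n → ℝ) ⬝ᵥ M *ᵥ (Pi.single j 1) = M j j := by
    intro M j
    simp [Matrix.mulVec_single]
  have hApos : ∀ j, 0 < A j j := by
    intro j
    have hsne : (Pi.single j 1 : Fin n → ℝ) ≠ 0 := by
      intro h
      have := congrFun h j
      simp [Pi.single_eq_same] at this
    have h0 := hA.dotProduct_mulVec_pos hsne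
    simpa [hdiag A j] using h0
  have hGApos : ∀ j, A j j ≤ G j j := by
    intro j
    have h0 := myQuad_nonneg hGA (Pi.single j 1)
    rw [hdiag] at h0
    simp only [Matrix.sub_apply] at h0
    linarith
  have hAω' : ∀ j, A j j ≤ ω := by
    intro j
    have h0 := myQuad_nonneg hAω (Pi.single j 1)
    rw [hdiag] at h0
    simp only [Matrix.sub_apply, Matrix.smul_apply, Matrix.one_apply_eq, smul_eq_mul,
      mul_one] at h0
    linarith
  set e : Fin n → ℝ := Pi.single i₀ 1 with he
  set g : ℝ := G i₀ i₀ with hgdef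
  set a : ℝ := A i₀ i₀ with hadef
  have ha : 0 < a := hApos i₀
  have hg : 0 < g := lt_of_lt_of_le ha (hGApos i₀)
  set r : ℝ := g / a with hrdef
  have hr1 : 1 ≤ r := (one_le_div ha).mpr (hGApos i₀)
  set u : Fin n → ℝ := G *ᵥ e with hu
  set w : Fin n → ℝ := A *ᵥ e with hw
  have hwinv : A⁻¹ *ᵥ w = e := by
    rw [hw, Matrix.mulVec_mulVec, hInv, Matrix.one_mulVec]
  have hue : u ⬝ᵥ e = g := by
    rw [hu, he, dotProduct_single_one]
    simp [Matrix.mulVec_single, hgdef]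
  have hwe : w ⬝ᵥ e = a := by
    rw [hw, he, dotProduct_single_one]
    simp [Matrix.mulVec_single, hadef]
  set Q : ℝ := u ⬝ᵥ A⁻¹ *ᵥ u with hQdef
  -- trace expansion
  have hT : (A⁻¹ * (G - g⁻¹ • vecMulVec u u + a⁻¹ • vecMulVec w w)).trace
      = (A⁻¹ * G).trace - g⁻¹ * Q + 1 := by
    rw [Matrix.mul_add, Matrix.mul_sub, Matrix.mul_smul, Matrix.mul_smul,
      Matrix.trace_add, Matrix.trace_sub, Matrix.trace_smul, Matrix.trace_smul,
      myTrace_mul_vecMulVec, myTrace_mul_vecMulVec]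
    have h2 : w ⬝ᵥ A⁻¹ *ᵥ w = a := by rw [hwinv, hwe]
    rw [h2, smul_eq_mul, smul_eq_mul, inv_mul_cancel₀ (ne_of_gt ha)]
  -- Cauchy-Schwarz : g^2 ≤ Q * a
  have hCS : g^2 ≤ Q * a := by
    have h1 := myCS hAinvPD.posSemidef u w
    have h2 : u ⬝ᵥ A⁻¹ *ᵥ w = g := by rw [hwinv, hue]
    have h3 : w ⬝ᵥ A⁻¹ *ᵥ w = a := by rw [hwinv, hwe]
    rw [h2, h3] at h1
    exact h1
  have hQg : r ≤ g⁻¹ * Q := by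
    rw [inv_mul_eq_div, hrdef, div_le_div_iff₀ ha hg]
    nlinarith
  -- μ⁻¹ • 1 - A⁻¹ is PSD
  have hP : (μ⁻¹ • (1 : Matrix (Fin n) (Fin n) ℝ) - A⁻¹).PosSemidef := by
    refine Matrix.PosSemidef.of_dotProduct_mulVec_nonneg ?_ ?_
    · apply Matrix.IsHermitian.sub
      · show _ = _
        simp [Matrix.conjTranspose_smul]
      · exact hA.isHermitian.inv
    · intro x
      have hstar : (star x : Fin n → ℝ) = x := by simp
      rw [hstar]
      set y : Fin n → ℝ := A⁻¹ *ᵥ x with hy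
      have hxy : A *ᵥ y = x := by
        rw [hy, Matrix.mulVec_mulVec, hInv2, Matrix.one_mulVec]
      -- key : y (A*A - μA) y ≥ 0
      have hkey : 0 ≤ y ⬝ᵥ (A * A) *ᵥ y - μ * (y ⬝ᵥ A *ᵥ y) := by
        open scoped MatrixOrder in set S := CFC.sqrt A with hS
        open scoped MatrixOrder in have hSS : S * S = A := CFC.sqrt_mul_sqrt_self A hA.posSemidef.nonneg
        open scoped MatrixOrder in have hherm : Sᴴ = S := (CFC.sqrt_nonneg A).posSemidef.isHermitian.eq
        have hconj := hAμ.mul_mul_conjTranspose_same S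
        rw [hherm] at hconj
        have h2' : S * A * S = A * A := by
          conv_rhs => rw [← hSS, Matrix.mul_assoc, ← Matrix.mul_assoc S S S, hSS,
            ← Matrix.mul_assoc]
        have heq : S * (A - μ • (1 : Matrix (Fin n) (Fin n) ℝ)) * S
            = A * A - μ • A := by
          rw [Matrix.mul_sub, Matrix.sub_mul, Matrix.mul_smul, Matrix.smul_mul,
            Matrix.mul_one, hSS, h2']
        rw [heq] at hconj
        have h0 := myQuad_nonneg hconj y
        rw [Matrix.sub_mulVec] at h0
        simp only [dotProduct_sub, Matrix.smul_mulVec, dotProduct_smul,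
          smul_eq_mul] at h0
        linarith
      have h1 : x ⬝ᵥ x = y ⬝ᵥ (A * A) *ᵥ y := by
        conv_lhs => rw [← hxy]
        rw [myDot_symm hA.isHermitian (A *ᵥ y) y, Matrix.mulVec_mulVec]
      have h2 : x ⬝ᵥ A⁻¹ *ᵥ x = y ⬝ᵥ A *ᵥ y := by
        rw [← hy]
        conv_lhs => rw [← hxy]
        rw [dotProduct_comm]
      have hexp : x ⬝ᵥ (μ⁻¹ • (1 : Matrix (Fin n) (Fin n) ℝ) - A⁻¹) *ᵥ x
          = μ⁻¹ * (x ⬝ᵥ x) - x ⬝ᵥ A⁻¹ *ᵥ x := by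
        rw [Matrix.sub_mulVec]
        simp [Matrix.smul_mulVec, Matrix.one_mulVec, dotProduct_sub]
      rw [hexp, h1, h2]
      have hμinv : 0 < μ⁻¹ := inv_pos.mpr hμ
      have := mul_le_mul_of_nonneg_left hkey (le_of_lt hμinv)
      calc (0:ℝ) = μ⁻¹ * 0 := by ring
        _ ≤ μ⁻¹ * (y ⬝ᵥ (A * A) *ᵥ y - μ * (y ⬝ᵥ A *ᵥ y)) :=
            mul_le_mul_of_nonneg_left hkey (le_of_lt hμinv)
        _ ≤ μ⁻¹ * (y ⬝ᵥ (A * A) *ᵥ y) - y ⬝ᵥ A *ᵥ y := by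
            rw [mul_sub, ← mul_assoc, inv_mul_cancel₀ (ne_of_gt hμ), one_mul]
  -- trace bound: (A⁻¹G).trace - n ≤ μ⁻¹ * (G - A).trace
  have htr1 : ((A⁻¹) * (G - A)).trace = (A⁻¹ * G).trace - n := by
    rw [Matrix.mul_sub, Matrix.trace_sub, hInv, Matrix.trace_one]
    simp
  have htr2 : (A⁻¹ * (G - A)).trace ≤ μ⁻¹ * (G - A).trace := by
    have h0 := myTrace_mul_psd_nonneg hP hGA
    rw [Matrix.sub_mul, Matrix.trace_sub, Matrix.smul_mul, Matrix.one_mul,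
      Matrix.trace_smul, smul_eq_mul] at h0
    linarith
  -- entrywise bound on trace (G - A)
  have htr3 : (G - A).trace ≤ n * (ω * (r - 1)) := by
    rw [Matrix.trace]
    calc ∑ j, (G - A).diag j ≤ ∑ _j : Fin n, ω * (r - 1) := by
          apply Finset.sum_le_sum
          intro j _
          have hAj := hApos j
          have hωj := hAω' j
          have hGle : G j j ≤ r * A j j := (div_le_iff₀ hAj).mp (hgreedy j)
          simp only [Matrix.diag_apply, Matrix.sub_apply]
          nlinarith
      _ = n * (ω * (r - 1)) := by
          rw [Finset.sum_const, Finset.card_univ, Fintype.card_fin, nsmul_eq_mul]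
  have hσ : (A⁻¹ * G).trace - n ≤ μ⁻¹ * (n * (ω * (r - 1))) := by
    rw [← htr1]
    calc (A⁻¹ * (G - A)).trace ≤ μ⁻¹ * (G - A).trace := htr2
      _ ≤ μ⁻¹ * (n * (ω * (r - 1))) := by
          exact mul_le_mul_of_nonneg_left htr3 (le_of_lt (inv_pos.mpr hμ))
  -- assemble
  rw [hT]
  set σ : ℝ := (A⁻¹ * G).trace - (n:ℝ) with hσdef
  have hc : μ / (n * ω) * σ ≤ r - 1 := by
    have hpos : (0:ℝ) < n * ω := mul_pos hnR hω
    have h1 : μ / (n * ω) * σ ≤ μ / (n * ω) * (μ⁻¹ * (n * (ω * (r - 1)))) := by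
      apply mul_le_mul_of_nonneg_left hσ
      positivity
    have h2 : μ / (n * ω) * (μ⁻¹ * (n * (ω * (r - 1)))) = r - 1 := by
      field_simp
    linarith
  have hfin : r - 1 ≤ g⁻¹ * Q - 1 := by linarith
  have : σ - g⁻¹ * Q + 1 ≤ (1 - μ / (n * ω)) * σ := by nlinarith [hc, hfin]
  linarith [this]
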